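/- Let R be an integral domain of characteristic 2, let S = R[x] be a polynomial ring, and let a be a nonzero element of R. Let the group Z/2 act on S by R-algebra automorphisms, with the generator sending x to x + a. Then the ring of invariants S^{Z/2} equals R[u], where u = x(x+a). -/

import Mathlib

open Polynomial

/-- Let `R` be an integral domain of characteristic 2, `S = R[x]`,
and `a ≠ 0` in `R`. Let `ℤ/2` act on `S` by `R`-algebra automorphisms with the
generator sending `x ↦ x + a` (this is an involution since `char R = 2`).
Then the ring of invariants `S^{ℤ/2}` is `R[u]` with `u = x (x + a)`. -/
theorem invariants_of_involution_eq_adjoin_x_mul_x_add_a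
    (R : Type*) [CommRing R] [IsDomain R] (h2 : (2 : R) = 0)
    (a : R) (ha : a ≠ 0) :
    ∀ f : Polynomial R,
      Polynomial.aeval (X + C a) f = f ↔
        f ∈ Algebra.adjoin R ({X * (X + C a)} : Set (Polynomial R)) := by
  have haa : a + a = 0 := by rw [← two_mul, h2, zero_mul]
  have hX : (X : R[X]) + C a + C a = X := by
    rw [add_assoc, ← C_add, haa, C_0, add_zero]
  set u : R[X] := X * (X + C a) with hu
  have hσu : aeval (X + C a) u = u := by
    simp only [hu, map_mul, map_add, aeval_X, aeval_C, Polynomial.algebraMap_eq]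
    rw [hX, mul_comm]
  -- the map is an involution
  have hinvol : ∀ p : R[X], aeval (X + C a) (aeval (X + C a) p) = p := by
    have : ((aeval (X + C a) : R[X] →ₐ[R] R[X]).comp (aeval (X + C a))) =
        AlgHom.id R R[X] := by
      apply Polynomial.algHom_ext
      simp [hX]
    intro p
    exact AlgHom.congr_fun this p
  have hinj : Function.Injective (aeval (X + C a) : R[X] → R[X]) :=
    Function.LeftInverse.injective hinvol
  -- the map preserves degree
  have hdeg : ∀ p : R[X], (aeval (X + C a) p).degree = p.degree := by
    intro p
    by_cases hp : p = 0
    · simp [hp]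
    · have hne : aeval (X + C a) p ≠ 0 := fun h => hp (by
        rw [← hinvol p, h, map_zero])
      rw [degree_eq_natDegree hp, degree_eq_natDegree hne]
      have : (aeval (X + C a) p) = p.comp (X + C a) := rfl
      rw [this, natDegree_comp, natDegree_X_add_C, mul_one]
  -- invariant polynomial of degree ≤ 1 is constant
  have const_of_inv : ∀ p : R[X], p.natDegree ≤ 1 →
      aeval (X + C a) p = p → ∃ c, p = C c := by
    intro p hp hpinv
    have hrep := eq_X_add_C_of_natDegree_le_one hp
    have hσp : aeval (X + C a) p =
        C (p.coeff 1) * X + C (p.coeff 0) + C (p.coeff 1) * C a := by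
      conv_lhs => rw [hrep]
      simp only [map_add, map_mul, aeval_X, aeval_C, Polynomial.algebraMap_eq]
      ring
    rw [hpinv] at hσp
    conv_lhs at hσp => rw [hrep]
    have h0 : C (p.coeff 1) * C a = 0 := left_eq_add.mp hσp
    rw [← C_mul, C_eq_zero] at h0
    rcases mul_eq_zero.mp h0 with h | h
    · refine ⟨p.coeff 0, ?_⟩
      conv_lhs => rw [hrep]
      rw [h, C_0, zero_mul, zero_add]
    · exact absurd h ha
  have hmon : u.Monic := (monic_X).mul (monic_X_add_C a)
  have hudeg : u.degree = 2 := by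
    rw [hu, degree_mul, degree_X, degree_X_add_C]; rfl
  -- forward direction by strong induction on degree
  have key : ∀ n : ℕ, ∀ f : R[X], f.natDegree ≤ n → aeval (X + C a) f = f →
      f ∈ Algebra.adjoin R ({u} : Set R[X]) := by
    intro n
    induction n using Nat.strong_induction_on with
    | _ n ih =>
      intro f hfn hfinv
      by_cases h1 : f.natDegree ≤ 1
      · obtain ⟨c, rfl⟩ := const_of_inv f h1 hfinv
        exact Subalgebra.algebraMap_mem _ c
      · push_neg at h1
        set g := f /ₘ u with hg
        set r := f %ₘ u with hr
        have hsum : r + u * g = f := modByMonic_add_div f u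
        have hrdeg : r.degree < u.degree := degree_modByMonic_lt f hmon
        have hσeq : aeval (X + C a) r + u * aeval (X + C a) g = f := by
          have := congrArg (aeval (X + C a)) hsum
          rw [map_add, map_mul, hσu, hfinv] at this
          exact this
        have huniq := div_modByMonic_unique (aeval (X + C a) g)
          (aeval (X + C a) r) hmon ⟨hσeq, by rw [hdeg r]; exact hrdeg⟩
        have hginv : aeval (X + C a) g = g := huniq.1.symm
        have hrinv : aeval (X + C a) r = r := huniq.2.symm
        have hrd1 : r.natDegree ≤ 1 := by
          by_cases hr0 : r = 0
          · simp [hr0]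
          · have := (degree_eq_natDegree hr0) ▸ hrdeg
            rw [hudeg] at this
            exact_mod_cast Nat.lt_succ_iff.mp (by exact_mod_cast this)
        obtain ⟨c, hc⟩ := const_of_inv r hrd1 hrinv
        have hgdeg : g.natDegree < n := by
          have h2' : g.natDegree = f.natDegree - u.natDegree :=
            natDegree_divByMonic f hmon
          have hun : u.natDegree = 2 := natDegree_eq_of_degree_eq_some hudeg
          omega
        have hgmem := ih g.natDegree hgdeg g le_rfl hginv
        rw [← hsum, hc]
        exact add_mem (Subalgebra.algebraMap_mem _ c)
          (mul_mem (Algebra.subset_adjoin rfl) hgmem)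
  intro f
  constructor
  · intro hf
    exact key f.natDegree f le_rfl hf
  · intro hf
    induction hf using Algebra.adjoin_induction with
    | mem p hp => rw [Set.mem_singleton_iff.mp hp]; exact hσu
    | algebraMap c => simp
    | add p q _ _ hp hq => rw [map_add, hp, hq]
    | mul p q _ _ hp hq => rw [map_mul, hp, hq]
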